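/- Let A be an invertible automaton over X = {0,1} whose set of states S is partitioned into two nonempty parts P and Q such that: (i) one of the parts consists exactly of the active states and the other exactly of the inactive states; (ii) for each state s ∈ P, both τ(s,0) and τ(s,1) lie in the same part (both in P or both in Q); (iii) for each state s ∈ Q, exactly one of τ(s,0), τ(s,1) lies in P and the other lies in Q. Then every element of G(A) that can be written as a product g₁⋯g_k, where each g_i is a state of A or the inverse of a state, such that the number of factors g_i coming from active states (or their inverses) is odd and the number of factors coming from inactive states (or their inverses) is odd, has infinite order. In particular, G(A) is not a torsion group. -/

import Mathlib

/-- An invertible automaton over the two-letter alphabet `X = Bool` with set of states `S`: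
`out s` is the output permutation `π(s,·) : X ≃ X` of the state `s`, and `tr s x` is the
state `τ(s,x)` reached from `s` after reading the letter `x`. -/
structure BinAutomaton (S : Type*) where
  out : S → Equiv.Perm Bool
  tr : S → Bool → S

namespace BinAutomaton

variable {S : Type*}

/-- The action of the state `s` of the automaton `A` on finite binary words,
given by `s(xw) = π(s,x) · (τ(s,x))(w)`. -/
def act (A : BinAutomaton S) : S → List Bool → List Bool
  | _, [] => []
  | s, x :: w => A.out s x :: A.act (A.tr s x) w

@[simp] theorem act_nil (A : BinAutomaton S) (s : S) : A.act s [] = [] := rfl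

@[simp] theorem act_cons (A : BinAutomaton S) (s : S) (x : Bool) (w : List Bool) :
    A.act s (x :: w) = A.out s x :: A.act (A.tr s x) w := rfl

/-- The inverse automaton of `A`. -/
def invAut (A : BinAutomaton S) : BinAutomaton S where
  out s := (A.out s).symm
  tr s x := A.tr s ((A.out s).symm x)

@[simp] theorem invAut_out (A : BinAutomaton S) (s : S) :
    A.invAut.out s = (A.out s).symm := rfl

@[simp] theorem invAut_tr (A : BinAutomaton S) (s : S) (x : Bool) :
    A.invAut.tr s x = A.tr s ((A.out s).symm x) := rfl

theorem invAut_act_act (A : BinAutomaton S) (w : List Bool) :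
    ∀ s : S, A.invAut.act s (A.act s w) = w := by
  induction w with
  | nil => exact fun s => rfl
  | cons x w ih =>
    intro s
    simp only [act_cons, invAut_out, invAut_tr, Equiv.symm_apply_apply]
    rw [ih]

theorem act_invAut_act (A : BinAutomaton S) (w : List Bool) :
    ∀ s : S, A.act s (A.invAut.act s w) = w := by
  induction w with
  | nil => exact fun s => rfl
  | cons x w ih =>
    intro s
    simp only [act_cons, invAut_out, invAut_tr, Equiv.apply_symm_apply]
    rw [ih]

/-- The tree automorphism of `X* = List Bool` defined by the state `s` of the automaton `A`. -/
def toPerm (A : BinAutomaton S) (s : S) : Equiv.Perm (List Bool) where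
  toFun := A.act s
  invFun := A.invAut.act s
  left_inv w := A.invAut_act_act w s
  right_inv w := A.act_invAut_act w s

/-- The automaton group `G(A)`: the subgroup of the group of permutations of
`X* = List Bool` generated by the tree automorphisms defined by the states of `A`. -/
def autGroup (A : BinAutomaton S) : Subgroup (Equiv.Perm (List Bool)) :=
  Subgroup.closure (Set.range A.toPerm)


variable {T : Type*}

/-- Every permutation of `Bool`: value at `true` is the negation of value at `false`. -/
theorem permBool_true (e : Equiv.Perm Bool) : e true = !(e false) := by
  cases hf : e false <;> cases ht : e true <;> simp_all
  · exact absurd (e.injective (ht.trans hf.symm)) (by simp)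
  · exact absurd (e.injective (hf.trans ht.symm)) (by simp)

theorem permBool_apply (e : Equiv.Perm Bool) (x : Bool) : e x = xor (e false) x := by
  cases x
  · simp
  · rw [permBool_true]; cases e false <;> rfl

theorem permBool_invol (e : Equiv.Perm Bool) (x : Bool) : e (e x) = x := by
  have ht : e true = !(e false) := permBool_true e
  cases hf : e false <;> rw [hf] at ht <;> cases x <;> simp [hf, ht]

theorem permBool_symm (e : Equiv.Perm Bool) (x : Bool) : e.symm x = e x :=
  e.injective (by rw [Equiv.apply_symm_apply, permBool_invol])

/-! ### Products of states: multi-state action -/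

def mOut (B : BinAutomaton T) : List T → Bool → Bool
  | [], x => x
  | t :: M, x => B.out t (mOut B M x)

def mTr (B : BinAutomaton T) : List T → Bool → List T
  | [], _ => []
  | t :: M, x => B.tr t (mOut B M x) :: mTr B M x

def mAct (B : BinAutomaton T) : List T → List Bool → List Bool
  | [], w => w
  | t :: M, w => B.act t (mAct B M w)

def mTrW (B : BinAutomaton T) : List T → List Bool → List T
  | M, [] => M
  | M, x :: v => mTrW B (mTr B M x) v

@[simp] theorem mOut_nil (B : BinAutomaton T) (x : Bool) : mOut B [] x = x := rfl
@[simp] theorem mOut_cons (B : BinAutomaton T) (t : T) (M : List T) (x : Bool) :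
    mOut B (t :: M) x = B.out t (mOut B M x) := rfl
@[simp] theorem mTr_nil (B : BinAutomaton T) (x : Bool) : mTr B [] x = [] := rfl
@[simp] theorem mTr_cons (B : BinAutomaton T) (t : T) (M : List T) (x : Bool) :
    mTr B (t :: M) x = B.tr t (mOut B M x) :: mTr B M x := rfl
@[simp] theorem mAct_nil (B : BinAutomaton T) (w : List Bool) : mAct B [] w = w := rfl
@[simp] theorem mAct_consT (B : BinAutomaton T) (t : T) (M : List T) (w : List Bool) :
    mAct B (t :: M) w = B.act t (mAct B M w) := rfl
@[simp] theorem mTrW_nilW (B : BinAutomaton T) (M : List T) : mTrW B M [] = M := rfl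
@[simp] theorem mTrW_consW (B : BinAutomaton T) (M : List T) (x : Bool) (v : List Bool) :
    mTrW B M (x :: v) = mTrW B (mTr B M x) v := rfl

theorem act_length (B : BinAutomaton T) (t : T) (w : List Bool) :
    (B.act t w).length = w.length := by
  induction w generalizing t with
  | nil => rfl
  | cons x w ih => simp [ih]

theorem mAct_length (B : BinAutomaton T) (M : List T) (w : List Bool) :
    (mAct B M w).length = w.length := by
  induction M with
  | nil => rfl
  | cons t M ih => simp [act_length, ih]

@[simp] theorem mAct_nilW (B : BinAutomaton T) (M : List T) : mAct B M [] = [] := by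
  induction M with
  | nil => rfl
  | cons t M ih => simp [ih]

theorem mAct_consW (B : BinAutomaton T) (M : List T) (x : Bool) (w : List Bool) :
    mAct B M (x :: w) = mOut B M x :: mAct B (mTr B M x) w := by
  induction M with
  | nil => rfl
  | cons t M ih => simp [ih]

theorem mAct_singW (B : BinAutomaton T) (M : List T) (x : Bool) :
    mAct B M [x] = [mOut B M x] := by
  rw [mAct_consW]; simp

theorem mOut_append (B : BinAutomaton T) (M N : List T) (x : Bool) :
    mOut B (M ++ N) x = mOut B M (mOut B N x) := by
  induction M with
  | nil => rfl
  | cons t M ih => simp [ih]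

theorem mTr_append (B : BinAutomaton T) (M N : List T) (x : Bool) :
    mTr B (M ++ N) x = mTr B M (mOut B N x) ++ mTr B N x := by
  induction M with
  | nil => rfl
  | cons t M ih => simp [ih, mOut_append]

theorem mAct_appendT (B : BinAutomaton T) (M N : List T) (w : List Bool) :
    mAct B (M ++ N) w = mAct B M (mAct B N w) := by
  induction M with
  | nil => rfl
  | cons t M ih => simp [ih]

theorem mTrW_appendT (B : BinAutomaton T) (M N : List T) (v : List Bool) :
    mTrW B (M ++ N) v = mTrW B M (mAct B N v) ++ mTrW B N v := by
  induction v generalizing M N with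
  | nil => simp
  | cons x v ih => rw [mAct_consW]; simp [mTr_append, ih]

theorem mAct_appendW (B : BinAutomaton T) (M : List T) (v w : List Bool) :
    mAct B M (v ++ w) = mAct B M v ++ mAct B (mTrW B M v) w := by
  induction v generalizing M with
  | nil => simp
  | cons x v ih => simp [mAct_consW, ih]

theorem mAct_eq_prod (B : BinAutomaton T) (M : List T) (w : List Bool) :
    mAct B M w = ((M.map B.toPerm).prod) w := by
  induction M with
  | nil => simp
  | cons t M ih => simp [ih, toPerm]

theorem mAct_injective (B : BinAutomaton T) (M : List T) :
    Function.Injective (mAct B M) := by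
  intro a b h
  rw [mAct_eq_prod, mAct_eq_prod] at h
  exact ((M.map B.toPerm).prod).injective h

/-! ### Parity sums -/

def xorSum (l : List Bool) : Bool := l.foldr xor false

@[simp] theorem xorSum_nil : xorSum [] = false := rfl
@[simp] theorem xorSum_cons (a : Bool) (l : List Bool) :
    xorSum (a :: l) = xor a (xorSum l) := rfl

theorem xorSum_append (l₁ l₂ : List Bool) :
    xorSum (l₁ ++ l₂) = xor (xorSum l₁) (xorSum l₂) := by
  induction l₁ with
  | nil => simp
  | cons a l ih => simp [ih, Bool.xor_assoc]

instance : Std.Commutative xor := ⟨fun a b => by cases a <;> cases b <;> rfl⟩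
instance : Std.Associative xor := ⟨fun a b c => by cases a <;> cases b <;> cases c <;> rfl⟩
instance : LeftCommutative (xor) :=
  ⟨fun a b c => by cases a <;> cases b <;> cases c <;> rfl⟩

theorem xorSum_perm {l₁ l₂ : List Bool} (h : l₁.Perm l₂) : xorSum l₁ = xorSum l₂ :=
  h.foldr_eq false

theorem xorSum_map_xor {α : Type*} (l : List α) (f g : α → Bool) :
    xorSum (l.map fun a => xor (f a) (g a))
      = xor (xorSum (l.map f)) (xorSum (l.map g)) := by
  induction l with
  | nil => rfl
  | cons a l ih =>
    simp only [List.map_cons, xorSum_cons, ih]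
    generalize f a = p; generalize g a = q
    generalize xorSum (l.map f) = r; generalize xorSum (l.map g) = s
    cases p <;> cases q <;> cases r <;> cases s <;> rfl

theorem decide_odd_succ (m : ℕ) : decide (Odd (m + 1)) = !decide (Odd m) := by
  by_cases h : Odd m <;> simp [Nat.odd_add_one, h]

theorem xorSum_map_not {α : Type*} (l : List α) (f : α → Bool) :
    xorSum (l.map fun a => !(f a)) = xor (decide (Odd l.length)) (xorSum (l.map f)) := by
  induction l with
  | nil => rfl
  | cons a l ih =>
    simp only [List.map_cons, xorSum_cons, ih, List.length_cons, decide_odd_succ]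
    generalize f a = p
    generalize decide (Odd l.length) = d
    generalize xorSum (l.map f) = s
    cases p <;> cases d <;> cases s <;> rfl

theorem xorSum_flatMap_pair {α : Type*} (l : List α) (g₁ g₂ : α → Bool) :
    xorSum (l.flatMap fun a => [g₁ a, g₂ a])
      = xorSum (l.map fun a => xor (g₁ a) (g₂ a)) := by
  induction l with
  | nil => rfl
  | cons a l ih =>
    simp only [List.flatMap_cons, List.map_cons, xorSum_cons, List.cons_append,
      List.nil_append, ih, xorSum_append]
    rw [Bool.xor_assoc]

theorem xorSum_countP {α : Type*} (l : List α) (f : α → Bool) :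
    xorSum (l.map f) = decide (Odd (l.countP f)) := by
  induction l with
  | nil => simp
  | cons a l ih =>
    simp only [List.map_cons, xorSum_cons, ih, List.countP_cons]
    by_cases h : f a = true
    · rw [if_pos h, decide_odd_succ, h]
      generalize decide (Odd (l.countP f)) = d
      cases d <;> rfl
    · rw [if_neg h, eq_false_of_ne_true h]
      simp

/-! ### The words of a given length -/

def allW : ℕ → List (List Bool)
  | 0 => [[]]
  | n + 1 => (allW n).flatMap fun v => [v ++ [false], v ++ [true]]

@[simp] theorem allW_zero : allW 0 = [[]] := rfl
theorem allW_succ (n : ℕ) :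
    allW (n + 1) = (allW n).flatMap fun v => [v ++ [false], v ++ [true]] := rfl

theorem interleave_perm {α β : Type*} (l : List α) (f h : α → β) :
    (l.flatMap fun a => [f a, h a]).Perm (l.map f ++ l.map h) := by
  induction l with
  | nil => rfl
  | cons a l ih =>
    simp only [List.flatMap_cons, List.map_cons, List.cons_append, List.nil_append]
    refine List.Perm.cons _ ?_
    exact (ih.cons (h a)).trans List.perm_middle.symm

theorem length_mem_allW {n : ℕ} {v : List Bool} (h : v ∈ allW n) : v.length = n := by
  induction n generalizing v with
  | zero => simp at h; simp [h]
  | succ n ih =>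
    rw [allW_succ, List.mem_flatMap] at h
    obtain ⟨u, hu, hv⟩ := h
    have := ih hu
    simp only [List.mem_cons, List.mem_singleton, List.not_mem_nil, or_false] at hv
    rcases hv with h | h <;> simp [h, this]

theorem mem_allW_of_length {n : ℕ} {v : List Bool} (h : v.length = n) : v ∈ allW n := by
  induction n generalizing v with
  | zero => simp [List.eq_nil_of_length_eq_zero h]
  | succ n ih =>
    have hne : v ≠ [] := by intro hv; rw [hv] at h; simp at h
    obtain ⟨u, x, hv⟩ : ∃ u x, v = u ++ [x] :=
      ⟨v.dropLast, v.getLast hne, (List.dropLast_append_getLast hne).symm⟩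
    subst hv
    have hu : u.length = n := by
      simpa using h
    rw [allW_succ, List.mem_flatMap]
    exact ⟨u, ih hu, by cases x <;> simp⟩

theorem allW_nodup (n : ℕ) : (allW n).Nodup := by
  induction n with
  | zero => simp
  | succ n ih =>
    have hperm := interleave_perm (allW n) (fun v => v ++ [false]) (fun v => v ++ [true])
    rw [allW_succ]
    refine hperm.symm.nodup ?_
    rw [List.nodup_append]
    refine ⟨ih.map (List.append_left_injective _), ih.map (List.append_left_injective _), ?_⟩
    intro a ha b hb hab
    rw [List.mem_map] at ha hb
    obtain ⟨u, _, rfl⟩ := ha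
    obtain ⟨u', _, h⟩ := hb
    have := List.append_inj' (h.trans hab.symm) (by simp)
    simp at this

theorem allW_length_even (n : ℕ) : Even (allW (n + 1)).length := by
  have hperm := interleave_perm (allW n) (fun v => v ++ [false]) (fun v => v ++ [true])
  rw [allW_succ, hperm.length_eq]
  simp [List.length_append]

/-! ### Sections along words, and level parity sums -/

def trW (B : BinAutomaton T) : T → List Bool → T
  | t, [] => t
  | t, x :: v => trW B (B.tr t x) v

@[simp] theorem trW_nil (B : BinAutomaton T) (t : T) : trW B t [] = t := rfl
@[simp] theorem trW_cons (B : BinAutomaton T) (t : T) (x : Bool) (v : List Bool) :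
    trW B t (x :: v) = trW B (B.tr t x) v := rfl

theorem trW_append (B : BinAutomaton T) (t : T) (u v : List Bool) :
    trW B t (u ++ v) = trW B (trW B t u) v := by
  induction u generalizing t with
  | nil => rfl
  | cons x u ih => simp [ih]

def actv (B : BinAutomaton T) (t : T) : Bool := B.out t false

def phi0 (B : BinAutomaton T) (M : List T) : Bool := xorSum (M.map (actv B))

@[simp] theorem phi0_nil (B : BinAutomaton T) : phi0 B [] = false := rfl
@[simp] theorem phi0_cons (B : BinAutomaton T) (t : T) (M : List T) :
    phi0 B (t :: M) = xor (actv B t) (phi0 B M) := rfl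

theorem phi0_append (B : BinAutomaton T) (M N : List T) :
    phi0 B (M ++ N) = xor (phi0 B M) (phi0 B N) := by
  simp [phi0, xorSum_append]

theorem mOut_phi0 (B : BinAutomaton T) (M : List T) (x : Bool) :
    mOut B M x = xor (phi0 B M) x := by
  induction M with
  | nil => simp
  | cons t M ih =>
    simp only [mOut_cons, ih, phi0_cons]
    rw [permBool_apply (B.out t), Bool.xor_assoc]
    rfl

/-- The xor-sum of `f` over all level-`n` sections of the state `t`. -/
def lvlS (B : BinAutomaton T) (f : T → Bool) (n : ℕ) (t : T) : Bool :=
  xorSum ((allW n).map fun u => f (trW B t u))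

theorem lvlS_zero (B : BinAutomaton T) (f : T → Bool) (t : T) :
    lvlS B f 0 t = f t := by
  simp [lvlS]

theorem lvlS_succ (B : BinAutomaton T) (f : T → Bool) (n : ℕ) (t : T) :
    lvlS B f (n + 1) t = xorSum ((allW n).map fun u =>
      xor (f (B.tr (trW B t u) false)) (f (B.tr (trW B t u) true))) := by
  rw [lvlS, allW_succ, List.map_flatMap]
  have : ∀ v : List Bool,
      (List.map (fun u => f (trW B t u)) [v ++ [false], v ++ [true]])
        = [f (B.tr (trW B t v) false), f (B.tr (trW B t v) true)] := by
    intro v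
    simp [trW_append]
  simp only [this]
  rw [xorSum_flatMap_pair]

section Invariant

variable (B : BinAutomaton T) (pB : T → Bool)

theorem chi_succ (Hp : ∀ t, xor (pB (B.tr t false)) (pB (B.tr t true)) = !(pB t)) (n : ℕ) (t : T) :
    lvlS B pB (n + 1) t = xorSum ((allW n).map fun u => !(pB (trW B t u))) := by
  rw [lvlS_succ]
  simp only [Hp]

theorem decide_odd_allW_succ (n : ℕ) : decide (Odd (allW (n + 1)).length) = false := by
  simp [Nat.not_odd_iff_even.symm.mp (allW_length_even n)]

theorem chi_val (Hp : ∀ t, xor (pB (B.tr t false)) (pB (B.tr t true)) = !(pB t)) : ∀ n : ℕ, ∀ t : T, lvlS B pB (n + 1) t = !(pB t) := by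
  intro n
  induction n with
  | zero => intro t; rw [chi_succ B pB Hp]; simp
  | succ n ih =>
    intro t
    rw [chi_succ B pB Hp, xorSum_map_not, decide_odd_allW_succ]
    have : xorSum ((allW (n + 1)).map fun u => pB (trW B t u)) = lvlS B pB (n + 1) t := rfl
    rw [Bool.false_xor, this, ih t]

theorem psi_succ (Hp : ∀ t, xor (pB (B.tr t false)) (pB (B.tr t true)) = !(pB t))
    (hact : (∀ t, actv B t = pB t) ∨ (∀ t, actv B t = !(pB t))) (n : ℕ) (t : T) : lvlS B (actv B) (n + 1) t = !(pB t) := by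
  rcases hact with h | h
  · have : actv B = pB := funext h
    rw [this, chi_val B pB Hp]
  · have : lvlS B (actv B) (n + 1) t
        = xorSum ((allW (n + 1)).map fun u => !(pB (trW B t u))) := by
      rw [lvlS]
      congr 1
      exact List.map_congr_left fun u _ => h _
    rw [this, xorSum_map_not, decide_odd_allW_succ]
    have h2 : xorSum ((allW (n + 1)).map fun u => pB (trW B t u)) = lvlS B pB (n + 1) t := rfl
    rw [Bool.false_xor, h2, chi_val B pB Hp]

end Invariant

/-! ### The level parity sum of a product of states -/

def PsiL (B : BinAutomaton T) (n : ℕ) (M : List T) : Bool :=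
  xorSum ((allW n).map fun u => phi0 B (mTrW B M u))

theorem mTrW_consT (B : BinAutomaton T) (t : T) (M : List T) (u : List Bool) :
    mTrW B (t :: M) u = trW B t (mAct B M u) :: mTrW B M u := by
  induction u generalizing t M with
  | nil => simp
  | cons x u ih =>
    rw [mTrW_consW, mTr_cons, ih, mAct_consW]
    rfl

@[simp] theorem mTrW_nilT (B : BinAutomaton T) (u : List Bool) : mTrW B [] u = [] := by
  induction u with
  | nil => rfl
  | cons x u ih => simpa using ih

theorem xorSum_map_false {α : Type*} (l : List α) :
    xorSum (l.map fun _ => false) = false := by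
  induction l with
  | nil => rfl
  | cons a l ih => rw [List.map_cons, xorSum_cons, ih]; rfl

theorem perm_map_mAct (B : BinAutomaton T) (M : List T) (n : ℕ) :
    ((allW n).map (mAct B M)).Perm (allW n) := by
  have hnd : ((allW n).map (mAct B M)).Nodup := (allW_nodup n).map (mAct_injective B M)
  have hsub : ((allW n).map (mAct B M)) ⊆ allW n := by
    intro a ha
    rw [List.mem_map] at ha
    obtain ⟨u, hu, rfl⟩ := ha
    exact mem_allW_of_length ((mAct_length B M u).trans (length_mem_allW hu))
  exact (List.subperm_of_subset hnd hsub).perm_of_length_le (by simp)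

theorem PsiL_cons (B : BinAutomaton T) (t : T) (M : List T) (n : ℕ) :
    PsiL B n (t :: M) = xor (lvlS B (actv B) n t) (PsiL B n M) := by
  rw [PsiL]
  simp only [mTrW_consT, phi0_cons]
  rw [xorSum_map_xor]
  congr 1
  have : ((allW n).map fun u => actv B (trW B t (mAct B M u)))
      = ((allW n).map (mAct B M)).map fun w => actv B (trW B t w) := by
    rw [List.map_map]; rfl
  rw [this, xorSum_perm ((perm_map_mAct B M n).map _)]
  rfl

theorem PsiL_nil (B : BinAutomaton T) (n : ℕ) : PsiL B n [] = false := by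
  rw [PsiL]
  simp only [mTrW_nilT, phi0_nil]
  exact xorSum_map_false _

theorem PsiL_eq (B : BinAutomaton T) (n : ℕ) (M : List T) :
    PsiL B n M = xorSum (M.map (lvlS B (actv B) n)) := by
  induction M with
  | nil => simp [PsiL_nil]
  | cons t M ih => rw [PsiL_cons, ih]; rfl

/-! ### Powers and spherical transitivity -/

def rep (M : List T) : ℕ → List T
  | 0 => []
  | j + 1 => M ++ rep M j

@[simp] theorem rep_zero (M : List T) : rep M 0 = [] := rfl
@[simp] theorem rep_succ (M : List T) (j : ℕ) : rep M (j + 1) = M ++ rep M j := rfl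

theorem rep_add (M : List T) (a b : ℕ) : rep M (a + b) = rep M a ++ rep M b := by
  induction a with
  | zero => simp [Nat.zero_add]
  | succ a ih =>
    rw [Nat.succ_add, rep_succ, rep_succ, ih, List.append_assoc]

theorem mAct_rep_succ (B : BinAutomaton T) (M : List T) (j : ℕ) (v : List Bool) :
    mAct B (rep M (j + 1)) v = mAct B M (mAct B (rep M j) v) := by
  rw [rep_succ, mAct_appendT]

theorem mAct_rep_cancel (B : BinAutomaton T) (M : List T) (a b : ℕ) (v : List Bool) :
    ∀ k : ℕ, mAct B (rep M (a + k)) v = mAct B (rep M (b + k)) v →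
      mAct B (rep M a) v = mAct B (rep M b) v := by
  intro k
  induction k with
  | zero => exact fun h => h
  | succ k ih =>
    intro h
    rw [← Nat.add_assoc, ← Nat.add_assoc, mAct_rep_succ, mAct_rep_succ] at h
    exact ih (mAct_injective B M h)

theorem orbit_perm (B : BinAutomaton T) (M : List T)
    (hΨ : ∀ k, PsiL B k M = true) :
    ∀ n : ℕ, ∀ v : List Bool, v.length = n →
      ((List.range (2 ^ n)).map fun j => mAct B (rep M j) v).Perm (allW n) := by
  intro n
  induction n with
  | zero =>
    intro v hv
    rw [List.eq_nil_of_length_eq_zero hv]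
    simp
  | succ n ih =>
    intro w hw
    have hne : w ≠ [] := by intro h; rw [h] at hw; simp at hw
    obtain ⟨v, x, hv⟩ : ∃ v x, w = v ++ [x] :=
      ⟨w.dropLast, w.getLast hne, (List.dropLast_append_getLast hne).symm⟩
    subst hv
    have hvlen : v.length = n := by simpa using hw
    have IH := ih v hvlen
    have hnodup : ((List.range (2 ^ n)).map fun j => mAct B (rep M j) v).Nodup :=
      IH.symm.nodup (allW_nodup n)
    have hinj : ∀ i < 2 ^ n, ∀ j < 2 ^ n,
        mAct B (rep M i) v = mAct B (rep M j) v → i = j := by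
      intro i hi j hj hij
      exact (List.nodup_map_iff_inj_on List.nodup_range).mp hnodup
        i (List.mem_range.mpr hi) j (List.mem_range.mpr hj) hij
    -- `g ^ (2 ^ n)` fixes the level `n`
    have hfix : mAct B (rep M (2 ^ n)) v = v := by
      have hmem : mAct B (rep M (2 ^ n)) v ∈ allW n :=
        mem_allW_of_length ((mAct_length _ _ _).trans hvlen)
      have hmem2 : mAct B (rep M (2 ^ n)) v
          ∈ (List.range (2 ^ n)).map fun j => mAct B (rep M j) v := IH.mem_iff.mpr hmem
      rw [List.mem_map] at hmem2
      obtain ⟨j, hj, hje⟩ := hmem2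
      rw [List.mem_range] at hj
      rcases Nat.eq_zero_or_pos j with rfl | hjpos
      · simpa using hje.symm
      · exfalso
        have h1 : mAct B (rep M ((2 ^ n - j) + j)) v = mAct B (rep M (0 + j)) v := by
          rw [Nat.sub_add_cancel hj.le, Nat.zero_add]; exact hje.symm
        have h2 := mAct_rep_cancel B M _ _ v j h1
        have h3 := hinj (2 ^ n - j) (by omega) 0 (Nat.two_pow_pos n) h2
        omega
    -- the section of `g ^ (2 ^ n)` at `v` is active
    have hPhi : phi0 B (mTrW B (rep M (2 ^ n)) v) = true := by
      have key : ∀ m : ℕ, phi0 B (mTrW B (rep M m) v)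
          = xorSum ((List.range m).map fun j => phi0 B (mTrW B M (mAct B (rep M j) v))) := by
        intro m
        induction m with
        | zero => simp
        | succ m ihm =>
          rw [rep_succ, mTrW_appendT, phi0_append, List.range_succ, List.map_append,
            xorSum_append, ihm]
          simp [Bool.xor_comm]
      rw [key]
      have h4 : ((List.range (2 ^ n)).map fun j => phi0 B (mTrW B M (mAct B (rep M j) v)))
          = ((List.range (2 ^ n)).map fun j => mAct B (rep M j) v).map
              fun u => phi0 B (mTrW B M u) := by
        rw [List.map_map]; rfl
      rw [h4, xorSum_perm (IH.map _)]
      exact hΨ n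
    have hswap : ∀ y : Bool, mAct B (rep M (2 ^ n)) (v ++ [y]) = v ++ [!y] := by
      intro y
      rw [mAct_appendW, hfix, mAct_singW, mOut_phi0, hPhi]
      cases y <;> rfl
    have hshift : ∀ j, mAct B (rep M (2 ^ n + j)) (v ++ [x]) = mAct B (rep M j) (v ++ [!x]) := by
      intro j
      rw [Nat.add_comm, rep_add, mAct_appendT, hswap]
    -- assembling the orbit at level `n + 1`
    have hsplit : (2 : ℕ) ^ (n + 1) = 2 ^ n + 2 ^ n := by ring
    rw [hsplit, List.range_add, List.map_append, List.map_map]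
    have hsecond : ((List.range (2 ^ n)).map
          ((fun j => mAct B (rep M j) (v ++ [x])) ∘ fun i => 2 ^ n + i))
        = (List.range (2 ^ n)).map fun j => mAct B (rep M j) (v ++ [!x]) :=
      List.map_congr_left fun j _ => hshift j
    rw [hsecond]
    have hinter := interleave_perm (List.range (2 ^ n))
      (fun j => mAct B (rep M j) (v ++ [x])) (fun j => mAct B (rep M j) (v ++ [!x]))
    refine hinter.symm.trans ?_
    have hpair : ∀ j ∈ List.range (2 ^ n),
        [mAct B (rep M j) (v ++ [x]), mAct B (rep M j) (v ++ [!x])].Perm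
          [mAct B (rep M j) v ++ [false], mAct B (rep M j) v ++ [true]] := by
      intro j _
      have hd : ∀ y : Bool, mAct B (rep M j) (v ++ [y])
          = mAct B (rep M j) v ++ [xor (phi0 B (mTrW B (rep M j) v)) y] := by
        intro y
        rw [mAct_appendW, mAct_singW, mOut_phi0]
      rw [hd x, hd (!x)]
      cases hc : phi0 B (mTrW B (rep M j) v) <;> cases x
      · exact List.Perm.refl _
      · exact List.Perm.swap _ _ _
      · exact List.Perm.swap _ _ _
      · exact List.Perm.refl _
    refine (List.Perm.flatMap_left _ hpair).trans ?_
    have hflat : ((List.range (2 ^ n)).flatMap fun j =>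
          [mAct B (rep M j) v ++ [false], mAct B (rep M j) v ++ [true]])
        = (((List.range (2 ^ n)).map fun j => mAct B (rep M j) v).flatMap
            fun u => [u ++ [false], u ++ [true]]) := by
      rw [List.flatMap_map]
    rw [hflat, allW_succ]
    exact IH.flatMap_right _

/-! ### The extension of an automaton by inverses of states -/

def ext (A : BinAutomaton S) : BinAutomaton (S × Bool) where
  out t := if t.2 then A.out t.1 else (A.out t.1).symm
  tr t x := if t.2 then (A.tr t.1 x, true) else (A.tr t.1 ((A.out t.1).symm x), false)

@[simp] theorem ext_out (A : BinAutomaton S) (t : S × Bool) :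
    (ext A).out t = if t.2 then A.out t.1 else (A.out t.1).symm := rfl

@[simp] theorem ext_tr (A : BinAutomaton S) (t : S × Bool) (x : Bool) :
    (ext A).tr t x = if t.2 then (A.tr t.1 x, true)
      else (A.tr t.1 ((A.out t.1).symm x), false) := rfl

theorem ext_act_true (A : BinAutomaton S) (s : S) (w : List Bool) :
    (ext A).act (s, true) w = A.act s w := by
  induction w generalizing s with
  | nil => rfl
  | cons x w ih =>
    rw [act_cons, act_cons, ext_out, ext_tr]
    simp [ih]

theorem ext_act_false (A : BinAutomaton S) (s : S) (w : List Bool) :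
    (ext A).act (s, false) w = A.invAut.act s w := by
  induction w generalizing s with
  | nil => rfl
  | cons x w ih =>
    rw [act_cons, act_cons, ext_out, ext_tr, invAut_out, invAut_tr]
    simp [ih]

theorem ext_toPerm (A : BinAutomaton S) (p : S × Bool) :
    (ext A).toPerm p = if p.2 then A.toPerm p.1 else (A.toPerm p.1)⁻¹ := by
  obtain ⟨s, e⟩ := p
  cases e
  · apply Equiv.ext
    intro w
    show (ext A).act (s, false) w = ((A.toPerm s)⁻¹ : Equiv.Perm (List Bool)) w
    rw [ext_act_false, Equiv.Perm.inv_def]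
    rfl
  · apply Equiv.ext
    intro w
    show (ext A).act (s, true) w = A.toPerm s w
    rw [ext_act_true]
    rfl

theorem prod_eq_mAct (A : BinAutomaton S) (l : List (S × Bool)) (w : List Bool) :
    ((l.map fun p : S × Bool => if p.2 then A.toPerm p.1 else (A.toPerm p.1)⁻¹).prod) w
      = mAct (ext A) l w := by
  have h : (l.map fun p : S × Bool => if p.2 then A.toPerm p.1 else (A.toPerm p.1)⁻¹)
      = l.map (ext A).toPerm :=
    List.map_congr_left fun p _ => (ext_toPerm A p).symm
  rw [h, ← mAct_eq_prod]

end BinAutomaton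

open BinAutomaton

/-- Let `A` be an invertible automaton over `X = {0,1}` whose set of
states splits into two nonempty parts `P` and `Q = Pᶜ` such that (i) one of the parts
consists exactly of the active states (those whose output permutation is the
transposition, i.e. sends `0 = false` to `1 = true`) and the other of the inactive ones;
(ii) for each state of `P` both arrows go to states in the same part; (iii) for each
state of `Q` exactly one arrow goes to a state of `P` and the other to a state of `Q`.
Then every element of `G(A)` which is a product of states and inverses of states with an
odd number of active factors and an odd number of inactive factors has infinite order;
in particular `G(A)` is not a torsion group. -/
theorem odd_active_odd_inactive_infinite_order {S : Type} [Finite S]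
    (A : BinAutomaton S) (P : Set S) (hPne : P.Nonempty) (hQne : Pᶜ.Nonempty)
    (hparts : (∀ s, s ∈ P ↔ A.out s false = true) ∨ (∀ s, s ∈ Pᶜ ↔ A.out s false = true))
    (hP : ∀ s ∈ P, (A.tr s false ∈ P ↔ A.tr s true ∈ P))
    (hQ : ∀ s ∈ Pᶜ, (A.tr s false ∈ P ↔ A.tr s true ∉ P)) :
    (∀ l : List (S × Bool),
      Odd (l.countP fun p => A.out p.1 false) →
      Odd (l.countP fun p => !(A.out p.1 false)) →
      ¬ IsOfFinOrder
        ((l.map fun p => if p.2 then A.toPerm p.1 else (A.toPerm p.1)⁻¹).prod)) ∧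
    ∃ g ∈ A.autGroup, ¬ IsOfFinOrder g := by
  classical
  have main : ∀ l : List (S × Bool),
      Odd (l.countP fun p => A.out p.1 false) →
      Odd (l.countP fun p => !(A.out p.1 false)) →
      ¬ IsOfFinOrder
        ((l.map fun p => if p.2 then A.toPerm p.1 else (A.toPerm p.1)⁻¹).prod) := by
    intro l hodd1 hodd2 hfin
    set g := (l.map fun p => if p.2 then A.toPerm p.1 else (A.toPerm p.1)⁻¹).prod with hgdef
    -- the powers of `g` act as the lists `rep l j`
    have hpow : ∀ j w, (g ^ j) w = mAct (ext A) (rep l j) w := by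
      intro j
      induction j with
      | zero => intro w; simp
      | succ j ih =>
        intro w
        rw [pow_succ', Equiv.Perm.mul_apply, ih w, hgdef, prod_eq_mAct, mAct_rep_succ]
    -- the partition function
    set pB : S × Bool → Bool := fun t => decide (t.1 ∈ P) with hpBdef
    have hsymmout : ∀ (s : S) (x : Bool), (A.out s).symm x = A.out s x :=
      fun s x => permBool_symm _ x
    have hcore : ∀ s : S, xor (decide (A.tr s false ∈ P)) (decide (A.tr s true ∈ P))
        = !(decide (s ∈ P)) := by
      intro s
      by_cases hs : s ∈ P
      · have h := hP s hs
        by_cases h0 : A.tr s false ∈ P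
        · simp [hs, h0, h.mp h0]
        · have h1 : A.tr s true ∉ P := fun hh => h0 (h.mpr hh)
          simp [hs, h0, h1]
      · have h := hQ s hs
        by_cases h0 : A.tr s false ∈ P
        · simp [hs, h0, h.mp h0]
        · have h1 : A.tr s true ∈ P := by
            by_contra h1
            exact h0 (h.mpr h1)
          simp [hs, h0, h1]
    have hpair : ∀ t : S × Bool,
        xor (pB ((ext A).tr t false)) (pB ((ext A).tr t true)) = !(pB t) := by
      rintro ⟨s, e⟩
      cases e
      · show xor (decide (A.tr s ((A.out s).symm false) ∈ P))
            (decide (A.tr s ((A.out s).symm true) ∈ P)) = !(decide (s ∈ P))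
        rw [hsymmout, hsymmout, permBool_true]
        cases hc : A.out s false
        · simpa using hcore s
        · rw [Bool.xor_comm]
          simpa using hcore s
      · exact hcore s
    have hactv : ∀ t : S × Bool, actv (ext A) t = A.out t.1 false := by
      rintro ⟨s, e⟩
      cases e
      · show (A.out s).symm false = A.out s false
        exact hsymmout s false
      · rfl
    have hactpB : (∀ t, actv (ext A) t = pB t) ∨ (∀ t, actv (ext A) t = !(pB t)) := by
      rcases hparts with h | h
      · left
        intro t
        rw [hactv]
        by_cases hm : t.1 ∈ P
        · simp [hpBdef, hm, (h t.1).mp hm]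
        · have hne : A.out t.1 false ≠ true := fun hh => hm ((h t.1).mpr hh)
          simp [hpBdef, hm, eq_false_of_ne_true hne]
      · right
        intro t
        rw [hactv]
        by_cases hm : t.1 ∈ P
        · have hne : A.out t.1 false ≠ true := fun hh => ((h t.1).mpr hh) hm
          simp [hpBdef, hm, eq_false_of_ne_true hne]
        · simp [hpBdef, hm, (h t.1).mp hm]
    -- the level parity sums of `l` are all odd
    have hΨ : ∀ k, PsiL (ext A) k l = true := by
      intro k
      rw [PsiL_eq]
      cases k with
      | zero =>
        have h1 : l.map (lvlS (ext A) (actv (ext A)) 0)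
            = l.map fun p => A.out p.1 false :=
          List.map_congr_left fun t _ => (lvlS_zero _ _ _).trans (hactv t)
        rw [h1, xorSum_countP]
        simpa using hodd1
      | succ k =>
        have h1 : l.map (lvlS (ext A) (actv (ext A)) (k + 1))
            = l.map fun t => !(pB t) :=
          List.map_congr_left fun t _ => psi_succ (ext A) pB hpair hactpB k t
        rw [h1]
        rcases hactpB with h | h
        · have h2 : (l.map fun t => !(pB t)) = l.map fun p => !(A.out p.1 false) :=
            List.map_congr_left fun t _ => by rw [← hactv t, h t]
          rw [h2, xorSum_countP]
          simpa using hodd2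
        · have h2 : (l.map fun t => !(pB t)) = l.map fun p => A.out p.1 false :=
            List.map_congr_left fun t _ => by rw [← h t, hactv t]
          rw [h2, xorSum_countP]
          simpa using hodd1
    -- the contradiction
    have hmpos : 0 < orderOf g := hfin.orderOf_pos
    set m := orderOf g with hmdef
    have hgm : g ^ m = 1 := pow_orderOf_eq_one g
    have htrans := orbit_perm (ext A) l hΨ m (List.replicate m false) (by simp)
    have hnd := htrans.symm.nodup (allW_nodup m)
    have hinj := (List.nodup_map_iff_inj_on List.nodup_range).mp hnd
    have h0 : mAct (ext A) (rep l 0) (List.replicate m false) = List.replicate m false := by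
      simp
    have hmm : mAct (ext A) (rep l m) (List.replicate m false) = List.replicate m false := by
      rw [← hpow m, hgm]
      rfl
    have h01 := hinj 0 (List.mem_range.mpr (Nat.two_pow_pos m))
      m (List.mem_range.mpr (Nat.lt_two_pow_self (n := m))) (h0.trans hmm.symm)
    omega
  refine ⟨main, ?_⟩
  obtain ⟨s, hs⟩ := hPne
  obtain ⟨t, ht⟩ := hQne
  refine ⟨A.toPerm s * A.toPerm t,
    mul_mem (Subgroup.subset_closure ⟨s, rfl⟩) (Subgroup.subset_closure ⟨t, rfl⟩), ?_⟩
  have hvals : (A.out s false = true ∧ A.out t false = false)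
      ∨ (A.out s false = false ∧ A.out t false = true) := by
    rcases hparts with h | h
    · refine Or.inl ⟨(h s).mp hs, ?_⟩
      have : A.out t false ≠ true := fun hh => ht ((h t).mpr hh)
      exact eq_false_of_ne_true this
    · refine Or.inr ⟨?_, (h t).mp ht⟩
      have : A.out s false ≠ true := fun hh => ((h s).mpr hh) hs
      exact eq_false_of_ne_true this
  have hlist : ([(s, true), (t, true)].map
        fun p : S × Bool => if p.2 then A.toPerm p.1 else (A.toPerm p.1)⁻¹).prod
      = A.toPerm s * A.toPerm t := by
    simp
  have happ := main [(s, true), (t, true)] ?_ ?_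
  · rwa [hlist] at happ
  · rcases hvals with ⟨h1, h2⟩ | ⟨h1, h2⟩ <;>
      simp [List.countP_cons, h1, h2]
  · rcases hvals with ⟨h1, h2⟩ | ⟨h1, h2⟩ <;>
      simp [List.countP_cons, h1, h2]
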